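/- Let (x, a, p, s) ∈ ℂ⁴. Then: (1) if (x, a, p, s) lies in the closure of 𝔽, then (s, ax−p) ∈ Γ, (s, −p) ∈ Γ, (x, a, p) lies in the closure of 𝔼, and (a, s, −p) lies in the closure of ℙ; (2) (x, a, p) lies in the closure of 𝔼 if and only if (x, a, p, 0) lies in the closure of 𝔽; (3) (s, p) ∈ Γ if and only if (0, 0, −p, s) lies in the closure of 𝔽. -/

import Mathlib

/-- The operator norm of a 2×2 complex matrix, acting on the Euclidean space ℂ². -/
noncomputable def opNorm (A : Matrix (Fin 2) (Fin 2) ℂ) : ℝ :=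
  ‖LinearMap.toContinuousLinearMap (Matrix.toEuclideanLin A)‖

/-- The domain 𝔽 = {(a₁₁, a₂₂, det A, a₁₂ + a₂₁) : A ∈ M₂(ℂ), ‖A‖ < 1}. -/
noncomputable def domF : Set (ℂ × ℂ × ℂ × ℂ) :=
  {w | ∃ A : Matrix (Fin 2) (Fin 2) ℂ, opNorm A < 1 ∧
    w = (A 0 0, A 1 1, A.det, A 0 1 + A 1 0)}

/-- The closed symmetrized bidisc Γ. -/
def GammaSet : Set (ℂ × ℂ) :=
  {w | ∃ z1 z2 : ℂ, ‖z1‖ ≤ 1 ∧ ‖z2‖ ≤ 1 ∧ w = (z1 + z2, z1 * z2)}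

/-- The tetrablock 𝔼. -/
def tetraE : Set (ℂ × ℂ × ℂ) :=
  {x | ∀ z1 z2 : ℂ, ‖z1‖ ≤ 1 → ‖z2‖ ≤ 1 →
    1 - x.1 * z1 - x.2.1 * z2 + x.2.2 * z1 * z2 ≠ 0}

/-- The pentablock ℙ = {(a₂₁, a₁₁ + a₂₂, det A) : A ∈ M₂(ℂ), ‖A‖ < 1}. -/
noncomputable def pentaP : Set (ℂ × ℂ × ℂ) :=
  {w | ∃ A : Matrix (Fin 2) (Fin 2) ℂ, opNorm A < 1 ∧
    w = (A 1 0, A 0 0 + A 1 1, A.det)}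

open scoped Matrix.Norms.L2Operator
open Matrix Filter Set

section Auxiliary

lemma opNorm_eq (A : Matrix (Fin 2) (Fin 2) ℂ) : opNorm A = ‖A‖ := rfl

lemma opNorm_nonneg' (A : Matrix (Fin 2) (Fin 2) ℂ) : 0 ≤ opNorm A := by
  rw [opNorm_eq]; exact norm_nonneg A

lemma euc_norm (w : Fin 2 → ℂ) :
    ‖(WithLp.equiv 2 (Fin 2 → ℂ)).symm w‖
      = Real.sqrt (‖(w 0)‖ ^ 2 + ‖(w 1)‖ ^ 2) := by
  rw [EuclideanSpace.norm_eq]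
  simp [Fin.sum_univ_two]

lemma euc_norm2 (w : Fin 2 → ℂ) :
    ‖(EuclideanSpace.equiv (Fin 2) ℂ).symm w‖
      = Real.sqrt (‖(w 0)‖ ^ 2 + ‖(w 1)‖ ^ 2) := by
  rw [EuclideanSpace.norm_eq]
  simp [Fin.sum_univ_two]

lemma vec_bound (A : Matrix (Fin 2) (Fin 2) ℂ) (v0 v1 : ℂ) :
    ‖(A 0 0 * v0 + A 0 1 * v1)‖ ^ 2 + ‖(A 1 0 * v0 + A 1 1 * v1)‖ ^ 2
      ≤ opNorm A ^ 2 * (‖v0‖ ^ 2 + ‖v1‖ ^ 2) := by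
  have h := Matrix.l2_opNorm_mulVec A ((WithLp.equiv 2 (Fin 2 → ℂ)).symm ![v0, v1])
  have hmv : A *ᵥ ((WithLp.equiv 2 (Fin 2 → ℂ)).symm ![v0, v1])
      = ![A 0 0 * v0 + A 0 1 * v1, A 1 0 * v0 + A 1 1 * v1] := by
    funext i
    fin_cases i <;> simp [Matrix.mulVec, dotProduct, Fin.sum_univ_two]
  rw [hmv, euc_norm2, euc_norm, ← opNorm_eq] at h
  simp only [Matrix.cons_val_zero, Matrix.cons_val_one, Matrix.head_cons] at h
  have h1 : Real.sqrt (‖(A 0 0 * v0 + A 0 1 * v1)‖ ^ 2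
        + ‖(A 1 0 * v0 + A 1 1 * v1)‖ ^ 2) ^ 2
      ≤ (opNorm A * Real.sqrt (‖v0‖ ^ 2 + ‖v1‖ ^ 2)) ^ 2 :=
    pow_le_pow_left₀ (Real.sqrt_nonneg _) h 2
  rw [Real.sq_sqrt (by positivity)] at h1
  rw [mul_pow, Real.sq_sqrt (by positivity)] at h1
  exact h1

lemma opNorm_le_of_bound (A : Matrix (Fin 2) (Fin 2) ℂ) (c : ℝ) (hc : 0 ≤ c)
    (h : ∀ v0 v1 : ℂ,
      ‖(A 0 0 * v0 + A 0 1 * v1)‖ ^ 2 + ‖(A 1 0 * v0 + A 1 1 * v1)‖ ^ 2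
        ≤ c ^ 2 * (‖v0‖ ^ 2 + ‖v1‖ ^ 2)) :
    opNorm A ≤ c := by
  apply ContinuousLinearMap.opNorm_le_bound _ hc
  intro x
  set v : Fin 2 → ℂ := (WithLp.equiv 2 (Fin 2 → ℂ)) x with hv
  have hx : x = (WithLp.equiv 2 (Fin 2 → ℂ)).symm v := rfl
  have happ : (LinearMap.toContinuousLinearMap (Matrix.toEuclideanLin A)) x
      = (WithLp.equiv 2 (Fin 2 → ℂ)).symm (A *ᵥ v) := rfl
  have hmv : A *ᵥ v = ![A 0 0 * v 0 + A 0 1 * v 1, A 1 0 * v 0 + A 1 1 * v 1] := by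
    funext i
    fin_cases i <;> simp [Matrix.mulVec, dotProduct, Fin.sum_univ_two]
  rw [happ, hmv, euc_norm, hx, euc_norm]
  simp only [Matrix.cons_val_zero, Matrix.cons_val_one, Matrix.head_cons]
  rw [← Real.sqrt_sq hc, ← Real.sqrt_mul (by positivity)]
  apply Real.sqrt_le_sqrt
  exact h (v 0) (v 1)

lemma entry_bound01 (A : Matrix (Fin 2) (Fin 2) ℂ) :
    ‖(A 0 1)‖ ≤ opNorm A ∧ ‖(A 1 0)‖ ≤ opNorm A := by
  have h0 := vec_bound A 1 0
  have h1 := vec_bound A 0 1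
  simp only [mul_one, mul_zero, add_zero, zero_add, _root_.map_one, _root_.map_zero] at h0 h1
  norm_num at h0 h1
  constructor <;>
    nlinarith [opNorm_nonneg' A, norm_nonneg (A 0 0),
      norm_nonneg (A 0 1), norm_nonneg (A 1 0),
      norm_nonneg (A 1 1)]

lemma root_bound (B : Matrix (Fin 2) (Fin 2) ℂ) (z : ℂ)
    (hz : z ^ 2 - (B 0 0 + B 1 1) * z + B.det = 0) : ‖z‖ ≤ opNorm B := by
  have hdet : (B - z • (1 : Matrix (Fin 2) (Fin 2) ℂ)).det = 0 := by
    rw [Matrix.det_fin_two]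
    simp only [Matrix.sub_apply, Matrix.smul_apply, Matrix.one_apply_eq, smul_eq_mul,
      Matrix.one_apply_ne (show (0:Fin 2) ≠ 1 by decide),
      Matrix.one_apply_ne (show (1:Fin 2) ≠ 0 by decide)]
    rw [Matrix.det_fin_two] at hz
    linear_combination hz
  obtain ⟨v, hv0, hv⟩ := (Matrix.exists_mulVec_eq_zero_iff).2 hdet
  have h0 : (B 0 0 - z) * v 0 + B 0 1 * v 1 = 0 := by
    have := congrFun hv 0
    simpa [Matrix.mulVec, dotProduct, Fin.sum_univ_two, Matrix.sub_apply,
      Matrix.smul_apply, Matrix.one_apply, Matrix.one_apply_ne] using this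
  have h1 : B 1 0 * v 0 + (B 1 1 - z) * v 1 = 0 := by
    have := congrFun hv 1
    simpa [Matrix.mulVec, dotProduct, Fin.sum_univ_two, Matrix.sub_apply,
      Matrix.smul_apply, Matrix.one_apply, Matrix.one_apply_ne] using this
  have e0 : B 0 0 * v 0 + B 0 1 * v 1 = z * v 0 := by linear_combination h0
  have e1 : B 1 0 * v 0 + B 1 1 * v 1 = z * v 1 := by linear_combination h1
  have hb := vec_bound B (v 0) (v 1)
  rw [e0, e1, norm_mul, norm_mul] at hb
  have hS : 0 < ‖(v 0)‖ ^ 2 + ‖(v 1)‖ ^ 2 := by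
    rcases Function.ne_iff.1 hv0 with ⟨i, hi⟩
    fin_cases i
    · have : 0 < ‖(v 0)‖ := norm_pos_iff.2 hi
      positivity
    · have : 0 < ‖(v 1)‖ := norm_pos_iff.2 hi
      positivity
  have h2 : ‖z‖ ^ 2 * (‖(v 0)‖ ^ 2 + ‖(v 1)‖ ^ 2)
      ≤ opNorm B ^ 2 * (‖(v 0)‖ ^ 2 + ‖(v 1)‖ ^ 2) := by nlinarith [hb]
  have h3 : ‖z‖ ^ 2 ≤ opNorm B ^ 2 := le_of_mul_le_mul_right h2 hS
  have h4 := Real.sqrt_le_sqrt h3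
  rwa [Real.sqrt_sq (norm_nonneg z),
    Real.sqrt_sq (opNorm_nonneg' B)] at h4

lemma gamma_closed : IsClosed GammaSet := by
  have he : GammaSet = (fun q : ℂ × ℂ => (q.1 + q.2, q.1 * q.2)) ''
      (Metric.closedBall 0 1 ×ˢ Metric.closedBall 0 1) := by
    ext w
    constructor
    · rintro ⟨z1, z2, h1, h2, rfl⟩
      exact ⟨(z1, z2), ⟨by simpa [] using h1,
        by simpa [] using h2⟩, rfl⟩
    · rintro ⟨⟨z1, z2⟩, ⟨h1, h2⟩, rfl⟩
      exact ⟨z1, z2, by simpa [] using h1,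
        by simpa [] using h2, rfl⟩
  rw [he]
  exact (((isCompact_closedBall _ _).prod (isCompact_closedBall _ _)).image
    (by continuity)).isClosed

lemma scaling (A : Matrix (Fin 2) (Fin 2) ℂ) (h : opNorm A ≤ 1) :
    (A 0 0, A 1 1, A.det, A 0 1 + A 1 0) ∈ closure domF := by
  set g : ℝ → ℂ × ℂ × ℂ × ℂ := fun r =>
    ((r:ℂ) * A 0 0, (r:ℂ) * A 1 1, (r:ℂ)^2 * A.det, (r:ℂ) * (A 0 1 + A 1 0)) with hg
  have hcont : Continuous g := by fun_prop
  have htend : Tendsto g (nhdsWithin 1 (Iio 1)) (nhds (g 1)) :=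
    (hcont.tendsto 1).mono_left nhdsWithin_le_nhds
  have hg1 : g 1 = (A 0 0, A 1 1, A.det, A 0 1 + A 1 0) := by simp [hg]
  rw [hg1] at htend
  apply mem_closure_of_tendsto htend
  filter_upwards [Ioo_mem_nhdsLT_of_mem (show (1:ℝ) ∈ Set.Ioc 0 1 by norm_num)] with r hr
  refine ⟨(r:ℂ) • A, ?_, ?_⟩
  · rw [opNorm_eq, norm_smul]
    have h2 : ‖((r:ℝ):ℂ)‖ = |r| := by simp
    rw [h2, abs_of_pos hr.1]
    calc r * ‖A‖ ≤ r * 1 := by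
          apply mul_le_mul_of_nonneg_left _ hr.1.le
          rw [← opNorm_eq]; exact h
      _ < 1 := by simpa using hr.2
  · have hdet : ((r:ℂ) • A).det = (r:ℂ)^2 * A.det := by
      rw [Matrix.det_smul]
      norm_num
    simp [hg, Matrix.smul_apply, smul_eq_mul, hdet, mul_add]

lemma swap_norm (A : Matrix (Fin 2) (Fin 2) ℂ) :
    opNorm !![A 0 1, A 0 0; A 1 1, A 1 0] ≤ opNorm A := by
  apply opNorm_le_of_bound _ _ (opNorm_nonneg' A)
  intro v0 v1
  have h := vec_bound A v1 v0
  show ‖(A 0 1 * v0 + A 0 0 * v1)‖ ^ 2 + ‖(A 1 1 * v0 + A 1 0 * v1)‖ ^ 2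
    ≤ opNorm A ^ 2 * (‖v0‖ ^ 2 + ‖v1‖ ^ 2)
  calc ‖(A 0 1 * v0 + A 0 0 * v1)‖ ^ 2 + ‖(A 1 1 * v0 + A 1 0 * v1)‖ ^ 2
      = ‖(A 0 0 * v1 + A 0 1 * v0)‖ ^ 2 + ‖(A 1 0 * v1 + A 1 1 * v0)‖ ^ 2 := by
        ring_nf
    _ ≤ opNorm A ^ 2 * (‖v1‖ ^ 2 + ‖v0‖ ^ 2) := h
    _ = opNorm A ^ 2 * (‖v0‖ ^ 2 + ‖v1‖ ^ 2) := by ring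

lemma mem_tetra (A : Matrix (Fin 2) (Fin 2) ℂ) (h1 : opNorm A < 1) :
    (A 0 0, A 1 1, A.det) ∈ tetraE := by
  intro z1 z2 hz1 hz2 hcon
  set M : Matrix (Fin 2) (Fin 2) ℂ :=
    !![1 - A 0 0 * z1, -(A 0 1 * z2); -(A 1 0 * z1), 1 - A 1 1 * z2] with hM
  have hdet : M.det = 0 := by
    rw [hM, Matrix.det_fin_two_of]
    rw [Matrix.det_fin_two] at hcon
    linear_combination hcon
  obtain ⟨v, hv0, hv⟩ := (Matrix.exists_mulVec_eq_zero_iff).2 hdet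
  have h0 : (1 - A 0 0 * z1) * v 0 + -(A 0 1 * z2) * v 1 = 0 := by
    have := congrFun hv 0
    simpa [hM, Matrix.mulVec, dotProduct, Fin.sum_univ_two] using this
  have h1' : -(A 1 0 * z1) * v 0 + (1 - A 1 1 * z2) * v 1 = 0 := by
    have := congrFun hv 1
    simpa [hM, Matrix.mulVec, dotProduct, Fin.sum_univ_two] using this
  have e0 : A 0 0 * (z1 * v 0) + A 0 1 * (z2 * v 1) = v 0 := by linear_combination -h0
  have e1 : A 1 0 * (z1 * v 0) + A 1 1 * (z2 * v 1) = v 1 := by linear_combination -h1'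
  have hb := vec_bound A (z1 * v 0) (z2 * v 1)
  rw [e0, e1] at hb
  have hS : 0 < ‖(v 0)‖ ^ 2 + ‖(v 1)‖ ^ 2 := by
    rcases Function.ne_iff.1 hv0 with ⟨i, hi⟩
    fin_cases i
    · have : 0 < ‖(v 0)‖ := norm_pos_iff.2 hi
      positivity
    · have : 0 < ‖(v 1)‖ := norm_pos_iff.2 hi
      positivity
  have hw0 : ‖(z1 * v 0)‖ ^ 2 ≤ ‖(v 0)‖ ^ 2 := by
    rw [norm_mul, mul_pow]
    apply mul_le_of_le_one_left (sq_nonneg _)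
    nlinarith [norm_nonneg z1]
  have hw1 : ‖(z2 * v 1)‖ ^ 2 ≤ ‖(v 1)‖ ^ 2 := by
    rw [norm_mul, mul_pow]
    apply mul_le_of_le_one_left (sq_nonneg _)
    nlinarith [norm_nonneg z2]
  have hN2 : opNorm A ^ 2 < 1 := by nlinarith [opNorm_nonneg' A]
  have hNW : opNorm A ^ 2 * (‖(z1 * v 0)‖ ^ 2 + ‖(z2 * v 1)‖ ^ 2)
      ≤ opNorm A ^ 2 * (‖(v 0)‖ ^ 2 + ‖(v 1)‖ ^ 2) :=
    mul_le_mul_of_nonneg_left (add_le_add hw0 hw1) (sq_nonneg _)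
  nlinarith [hb, hNW, hS, hN2]

end Auxiliary

section TetraAnalysis

open Complex

lemma tetra_swap {x1 x2 x3 : ℂ} (h : (x1, x2, x3) ∈ tetraE) : (x2, x1, x3) ∈ tetraE := by
  intro z1 z2 hz1 hz2 hc
  exact h z2 z1 hz2 hz1 (by linear_combination hc)

lemma tetra_x2_lt {x1 x2 x3 : ℂ} (h : (x1, x2, x3) ∈ tetraE) : ‖x2‖ < 1 := by
  by_contra hx
  push_neg at hx
  have hx2 : x2 ≠ 0 := by
    intro h0; rw [h0] at hx; simp at hx; linarith
  have habs : ‖(x2⁻¹)‖ ≤ 1 := by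
    rw [norm_inv]
    rw [inv_le_one_iff₀]
    right; exact hx
  apply h 0 x2⁻¹ (by simp) habs
  field_simp
  ring

lemma tetra_slice {x1 x2 x3 : ℂ} (h : (x1, x2, x3) ∈ tetraE) (ω : ℂ) (hω : ‖ω‖ ≤ 1) :
    ‖(x1 - x3 * ω)‖ < ‖(1 - x2 * ω)‖ := by
  by_contra hc
  push_neg at hc
  rcases eq_or_ne (x1 - x3 * ω) 0 with h0 | h0
  · rw [h0] at hc
    simp only [norm_zero] at hc
    have : ‖(1 - x2 * ω)‖ = 0 := le_antisymm hc (norm_nonneg _)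
    have h1 : 1 - x2 * ω = 0 := by
      rwa [norm_eq_zero] at this
    exact h 0 ω (by simp) hω (by linear_combination h1)
  · set z1 : ℂ := (1 - x2 * ω) / (x1 - x3 * ω) with hz1
    have habs : ‖z1‖ ≤ 1 := by
      rw [hz1, norm_div, div_le_one (norm_pos_iff.2 h0)]
      exact hc
    apply h z1 ω habs hω
    have : (x1 - x3 * ω) * z1 = 1 - x2 * ω := by
      rw [hz1]; field_simp
    linear_combination -this

lemma unimod_decomp (A : ℂ) :
    ∃ u : ℂ, u * (starRingEnd ℂ) u = 1 ∧ A = (‖A‖ : ℂ) * u := by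
  rcases eq_or_ne A 0 with h | h
  · exact ⟨1, by simp, by simp [h]⟩
  · refine ⟨A / (‖A‖ : ℂ), ?_, ?_⟩
    · have habs : ‖(A / (‖A‖ : ℂ))‖ = 1 := by
        rw [norm_div, Complex.norm_real, Real.norm_eq_abs, _root_.abs_of_nonneg (norm_nonneg _)]
        exact div_self (by simpa [norm_ne_zero_iff] using h)
      have := Complex.mul_conj (A / (‖A‖ : ℂ))
      rw [Complex.normSq_eq_norm_sq, habs] at this
      simpa using this
    · have : (‖A‖ : ℂ) ≠ 0 := by
        simpa [Complex.ofReal_ne_zero, norm_ne_zero_iff] using h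
      field_simp

lemma keyC2 {x1 x2 x3 : ℂ} (h : (x1, x2, x3) ∈ tetraE) :
    ‖(x1 - (starRingEnd ℂ) x2 * x3)‖ + ‖(x1 * x2 - x3)‖
      < 1 - ‖x2‖ ^ 2 := by
  have hb := tetra_x2_lt h
  set A : ℂ := x1 - (starRingEnd ℂ) x2 * x3 with hA
  set B : ℂ := x1 * x2 - x3 with hB
  obtain ⟨u, hu, huA⟩ := unimod_decomp A
  obtain ⟨v, hv, hvB⟩ := unimod_decomp B
  set μ : ℂ := u * (starRingEnd ℂ) v with hμdef
  have hμ : μ * (starRingEnd ℂ) μ = 1 := by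
    rw [hμdef]
    simp only [_root_.map_mul, Complex.conj_conj]
    have e : (u * (starRingEnd ℂ) v) * ((starRingEnd ℂ) u * v)
        = (u * (starRingEnd ℂ) u) * (v * (starRingEnd ℂ) v) := by ring
    rw [e, hu, hv, one_mul]
  have habsμ : ‖μ‖ = 1 := by
    have := Complex.mul_conj μ
    rw [hμ] at this
    have h2 : Complex.normSq μ = 1 := by
      have := congrArg Complex.re this.symm
      simpa using this
    rw [Complex.norm_def, h2, Real.sqrt_one]
  have hden : (1 + x2 * μ) ≠ 0 := by
    intro h0
    have : x2 * μ = -1 := by linear_combination h0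
    have h2 := congrArg (‖·‖) this
    rw [norm_mul, habsμ, mul_one, norm_neg, norm_one] at h2
    linarith
  set ω : ℂ := (μ + (starRingEnd ℂ) x2) / (1 + x2 * μ) with hω
  have hωden : ω * (1 + x2 * μ) = μ + (starRingEnd ℂ) x2 := by
    rw [hω]; exact div_mul_cancel₀ _ hden
  have hnum : (μ + (starRingEnd ℂ) x2) * (starRingEnd ℂ) (μ + (starRingEnd ℂ) x2)
      = (1 + x2 * μ) * (starRingEnd ℂ) (1 + x2 * μ) := by
    simp only [_root_.map_add, _root_.map_mul, Complex.conj_conj, _root_.map_one]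
    linear_combination (1 - x2 * (starRingEnd ℂ) x2) * hμ
  have habsω : ‖ω‖ = 1 := by
    have hnsq : Complex.normSq (μ + (starRingEnd ℂ) x2) = Complex.normSq (1 + x2 * μ) := by
      have := hnum
      rw [Complex.mul_conj, Complex.mul_conj] at this
      exact_mod_cast this
    have habseq : ‖(μ + (starRingEnd ℂ) x2)‖ = ‖(1 + x2 * μ)‖ := by
      rw [Complex.norm_def, Complex.norm_def, hnsq]
    rw [hω, norm_div, habseq]
    exact div_self (by simpa [norm_ne_zero_iff] using hden)
  have hslice := tetra_slice h ω (le_of_eq habsω)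
  have hid : (x1 - x3 * ω) * (1 + x2 * μ) = A + B * μ := by
    rw [hA, hB]
    linear_combination (-x3) * hωden
  have hid2 : (1 - x2 * ω) * (1 + x2 * μ) = 1 - x2 * (starRingEnd ℂ) x2 := by
    linear_combination (-x2) * hωden
  have hABu : A + B * μ = ((‖A‖ + ‖B‖ : ℝ) : ℂ) * u := by
    push_cast
    linear_combination huA + μ * hvB + ((‖B‖ : ℂ) * u) * hv
      + ((‖B‖ : ℂ) * v) * hμdef
  have habsu : ‖u‖ = 1 := by
    have h2 : Complex.normSq u = 1 := by
      have := Complex.mul_conj u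
      rw [hu] at this
      have := congrArg Complex.re this.symm
      simpa using this
    rw [Complex.norm_def, h2, Real.sqrt_one]
  have hL : ‖(x1 - x3 * ω)‖ * ‖(1 + x2 * μ)‖
      = ‖A‖ + ‖B‖ := by
    rw [← norm_mul, hid, hABu, norm_mul, habsu, mul_one, Complex.norm_real, Real.norm_eq_abs]
    exact _root_.abs_of_nonneg (by positivity)
  have hR : ‖(1 - x2 * ω)‖ * ‖(1 + x2 * μ)‖
      = 1 - ‖x2‖ ^ 2 := by
    rw [← norm_mul, hid2]
    have : (1 : ℂ) - x2 * (starRingEnd ℂ) x2 = ((1 - ‖x2‖ ^ 2 : ℝ) : ℂ) := by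
      rw [Complex.mul_conj, ← Complex.sq_norm]
      push_cast
      ring
    rw [this, Complex.norm_real, Real.norm_eq_abs]
    apply _root_.abs_of_nonneg
    nlinarith [norm_nonneg x2]
  have hpos : 0 < ‖(1 + x2 * μ)‖ :=
    norm_pos_iff.2 hden
  calc ‖A‖ + ‖B‖
      = ‖(x1 - x3 * ω)‖ * ‖(1 + x2 * μ)‖ := hL.symm
    _ < ‖(1 - x2 * ω)‖ * ‖(1 + x2 * μ)‖ :=
        mul_lt_mul_of_pos_right hslice hpos
    _ = 1 - ‖x2‖ ^ 2 := hR

lemma abs_identity (x1 x2 x3 : ℂ) :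
    ‖(x1 - (starRingEnd ℂ) x2 * x3)‖ ^ 2 - ‖(x1 * x2 - x3)‖ ^ 2
      = (‖x1‖ ^ 2 - ‖x3‖ ^ 2) * (1 - ‖x2‖ ^ 2) := by
  simp only [Complex.sq_norm]
  simp only [Complex.normSq_apply, Complex.sub_re, Complex.sub_im, Complex.mul_re,
    Complex.mul_im, Complex.conj_re, Complex.conj_im]
  ring

lemma tetra_ineqs {x1 x2 x3 : ℂ} (h : (x1, x2, x3) ∈ tetraE) :
    ‖x3‖ < 1 ∧
      ‖x1‖ ^ 2 + ‖x2‖ ^ 2 + 2 * ‖(x1 * x2 - x3)‖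
        < 1 + ‖x3‖ ^ 2 := by
  have hC2 := keyC2 h
  have hC1 := keyC2 (tetra_swap h)
  rw [mul_comm x2 x1] at hC1
  have hid := abs_identity x1 x2 x3
  set a := ‖x1‖
  set b := ‖x2‖
  set c := ‖x3‖
  set A2 := ‖(x1 - (starRingEnd ℂ) x2 * x3)‖
  set A1 := ‖(x2 - (starRingEnd ℂ) x1 * x3)‖
  set m := ‖(x1 * x2 - x3)‖
  have ha : 0 ≤ a := norm_nonneg _
  have hb : 0 ≤ b := norm_nonneg _
  have hc : 0 ≤ c := norm_nonneg _
  have hA2 : 0 ≤ A2 := norm_nonneg _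
  have hA1 : 0 ≤ A1 := norm_nonneg _
  have hm : 0 ≤ m := norm_nonneg _
  have tri1 : |a - b * c| ≤ A2 := by
    have := abs_norm_sub_norm_le x1 ((starRingEnd ℂ) x2 * x3)
    rw [norm_mul, Complex.norm_conj] at this
    exact this
  have tri2 : |b - a * c| ≤ A1 := by
    have := abs_norm_sub_norm_le x2 ((starRingEnd ℂ) x1 * x3)
    rw [norm_mul, Complex.norm_conj] at this
    exact this
  have tri3 : |c - a * b| ≤ m := by
    have := abs_norm_sub_norm_le x3 (x1 * x2)
    rw [norm_mul, norm_sub_rev] at this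
    exact this
  obtain ⟨e1, e1'⟩ := abs_le.1 tri1
  obtain ⟨e2, e2'⟩ := abs_le.1 tri2
  obtain ⟨e3, e3'⟩ := abs_le.1 tri3
  have hc1 : c < 1 := by nlinarith [sq_nonneg (a - b)]
  refine ⟨hc1, ?_⟩
  have key : (1 - b ^ 2) * (1 + c ^ 2 - a ^ 2 - b ^ 2 - 2 * m)
      = (1 - b ^ 2 - m) ^ 2 - A2 ^ 2 := by linear_combination hid
  have h1 : 0 < 1 - b ^ 2 - m - A2 := by linarith
  have h2 : 0 < 1 - b ^ 2 - m + A2 := by linarith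
  have h3 : 0 < (1 - b ^ 2 - m) ^ 2 - A2 ^ 2 := by nlinarith [mul_pos h1 h2]
  have hq : 0 < 1 - b ^ 2 := by linarith
  nlinarith [key, h3, hq]

lemma gamma_sq_identity (x1 x2 β : ℂ) :
    ‖(x1 * (starRingEnd ℂ) β - β * (starRingEnd ℂ) x2)‖ ^ 2
      = (‖x1‖ ^ 2 + ‖β‖ ^ 2) * (‖x2‖ ^ 2 + ‖β‖ ^ 2)
        - ‖(β ^ 2 + x1 * x2)‖ ^ 2 := by
  simp only [Complex.sq_norm]
  simp only [Complex.normSq_apply, Complex.sub_re, Complex.sub_im, Complex.add_re,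
    Complex.add_im, Complex.mul_re, Complex.mul_im, Complex.conj_re, Complex.conj_im,
    pow_two]
  ring

lemma amgm_aux (p q N0 N1 g : ℝ) (hp : 0 ≤ p) (hq : 0 ≤ q) (hg : 0 ≤ g)
    (hN0 : 0 ≤ N0) (hN1 : 0 ≤ N1) (hpq : g ^ 2 ≤ p * q) :
    2 * (N0 * N1) * g ≤ p * N0 ^ 2 + q * N1 ^ 2 := by
  have step : (2 * (N0 * N1) * g) ^ 2 ≤ (p * N0 ^ 2 + q * N1 ^ 2) ^ 2 := by
    nlinarith [sq_nonneg (p * N0 ^ 2 - q * N1 ^ 2),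
      mul_nonneg (mul_nonneg (sq_nonneg N0) (sq_nonneg N1)) (sub_nonneg.2 hpq)]
  nlinarith [step, mul_nonneg (mul_nonneg (mul_nonneg (by norm_num : (0:ℝ) ≤ 2) hN0) hN1) hg,
    add_nonneg (mul_nonneg hp (sq_nonneg N0)) (mul_nonneg hq (sq_nonneg N1))]

lemma realize {x1 x2 x3 : ℂ} (hc : ‖x3‖ ≤ 1)
    (hT : ‖x1‖ ^ 2 + ‖x2‖ ^ 2 + 2 * ‖(x1 * x2 - x3)‖
      ≤ 1 + ‖x3‖ ^ 2) :
    ∃ A : Matrix (Fin 2) (Fin 2) ℂ, opNorm A ≤ 1 ∧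
      A 0 0 = x1 ∧ A 1 1 = x2 ∧ A.det = x3 ∧ A 0 1 + A 1 0 = 0 := by
  obtain ⟨β, hβ⟩ := IsAlgClosed.exists_pow_nat_eq (k := ℂ) (x3 - x1 * x2) (n := 2) (by norm_num)
  have hx3 : x3 = β ^ 2 + x1 * x2 := by linear_combination -hβ
  have hmabs : ‖β‖ ^ 2 = ‖(x1 * x2 - x3)‖ := by
    rw [← norm_pow, hβ, norm_sub_rev]
  set a := ‖x1‖ with hadef
  set b := ‖x2‖ with hbdef
  set c := ‖x3‖ with hcdef
  set g := ‖(x1 * (starRingEnd ℂ) β - β * (starRingEnd ℂ) x2)‖ with hgdef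
  set nβ := ‖β‖ ^ 2 with hnβdef
  have hγsq : g ^ 2 = (a ^ 2 + nβ) * (b ^ 2 + nβ) - c ^ 2 := by
    rw [hgdef, gamma_sq_identity x1 x2 β, hadef, hbdef, hnβdef, hcdef, hx3]
  have hT' : a ^ 2 + b ^ 2 + 2 * nβ ≤ 1 + c ^ 2 := by rw [hmabs]; exact hT
  have hg : 0 ≤ g := norm_nonneg _
  have hnβ : 0 ≤ nβ := sq_nonneg _
  have hkey : (1 - (a ^ 2 + nβ)) * (1 - (b ^ 2 + nβ))
      = g ^ 2 + (1 + c ^ 2 - (a ^ 2 + b ^ 2 + 2 * nβ)) := by linear_combination -hγsq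
  have hcsq : c ^ 2 ≤ 1 := by nlinarith [norm_nonneg x3]
  have hp : 0 ≤ 1 - (a ^ 2 + nβ) := by
    by_contra hpneg
    push_neg at hpneg
    have hq'pos : 0 < 1 - (b ^ 2 + nβ) := by nlinarith
    nlinarith [mul_neg_of_neg_of_pos (show 1 - (a ^ 2 + nβ) < 0 by linarith) hq'pos, sq_nonneg g]
  have hq : 0 ≤ 1 - (b ^ 2 + nβ) := by
    by_contra hqneg
    push_neg at hqneg
    have hppos : 0 < 1 - (a ^ 2 + nβ) := by nlinarith
    nlinarith [mul_neg_of_neg_of_pos (show 1 - (b ^ 2 + nβ) < 0 by linarith) hppos, sq_nonneg g]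
  have hpq : g ^ 2 ≤ (1 - (a ^ 2 + nβ)) * (1 - (b ^ 2 + nβ)) := by nlinarith [hkey]
  refine ⟨!![x1, β; -β, x2], ?_, by simp, by simp, ?_, by simp⟩
  · apply opNorm_le_of_bound _ _ zero_le_one
    intro v0 v1
    rw [show !![x1, β; -β, x2] 0 0 = x1 from by simp,
      show !![x1, β; -β, x2] 0 1 = β from by simp,
      show !![x1, β; -β, x2] 1 0 = -β from by simp,
      show !![x1, β; -β, x2] 1 1 = x2 from by simp, one_pow, one_mul]
    have expand : ‖(x1 * v0 + β * v1)‖ ^ 2 + ‖(-β * v0 + x2 * v1)‖ ^ 2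
        = (a ^ 2 + nβ) * ‖v0‖ ^ 2 + (b ^ 2 + nβ) * ‖v1‖ ^ 2
          + 2 * (v0 * (starRingEnd ℂ) v1
              * (x1 * (starRingEnd ℂ) β - β * (starRingEnd ℂ) x2)).re := by
      simp only [Complex.sq_norm, Complex.normSq_add, Complex.normSq_mul, Complex.normSq_neg]
      rw [hadef, hbdef, hnβdef]
      simp only [Complex.sq_norm]
      have hcross : (x1 * v0 * (starRingEnd ℂ) (β * v1)
            + -β * v0 * (starRingEnd ℂ) (x2 * v1))
          = v0 * (starRingEnd ℂ) v1 * (x1 * (starRingEnd ℂ) β - β * (starRingEnd ℂ) x2) := by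
        simp only [_root_.map_mul]
        ring
      have := congrArg Complex.re hcross
      rw [Complex.add_re] at this
      linarith [this]
    rw [expand]
    have hre : (v0 * (starRingEnd ℂ) v1
          * (x1 * (starRingEnd ℂ) β - β * (starRingEnd ℂ) x2)).re
        ≤ ‖v0‖ * ‖v1‖ * g := by
      calc _ ≤ ‖(v0 * (starRingEnd ℂ) v1
            * (x1 * (starRingEnd ℂ) β - β * (starRingEnd ℂ) x2))‖ := Complex.re_le_norm _
        _ = ‖v0‖ * ‖v1‖ * g := by
            rw [norm_mul, norm_mul, Complex.norm_conj, hgdef]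
    have hv0 : 0 ≤ ‖v0‖ := norm_nonneg _
    have hv1 : 0 ≤ ‖v1‖ := norm_nonneg _
    have step2 := amgm_aux (1 - (a ^ 2 + nβ)) (1 - (b ^ 2 + nβ))
      (‖v0‖) (‖v1‖) g hp hq hg hv0 hv1 hpq
    linarith [hre, step2]
  · rw [Matrix.det_fin_two_of]
    linear_combination hβ

end TetraAnalysis

section Bullets

lemma bullet1 {x a p s : ℂ} (h : (x, a, p, s) ∈ closure domF) :
    (s, a * x - p) ∈ GammaSet := by
  have hcont : Continuous (fun w : ℂ × ℂ × ℂ × ℂ => (w.2.2.2, w.2.1 * w.1 - w.2.2.1)) := by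
    fun_prop
  have hsub : domF ⊆ (fun w : ℂ × ℂ × ℂ × ℂ => (w.2.2.2, w.2.1 * w.1 - w.2.2.1)) ⁻¹' GammaSet := by
    rintro w ⟨A, hA, rfl⟩
    refine ⟨A 0 1, A 1 0, ((entry_bound01 A).1.trans_lt hA).le,
      ((entry_bound01 A).2.trans_lt hA).le, ?_⟩
    simp only [Prod.mk.injEq]
    refine ⟨by trivial, ?_⟩
    rw [Matrix.det_fin_two]
    ring
  exact closure_minimal hsub (gamma_closed.preimage hcont) h

lemma swapMat_facts (A : Matrix (Fin 2) (Fin 2) ℂ) :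
    (!![A 0 1, A 0 0; A 1 1, A 1 0] : Matrix (Fin 2) (Fin 2) ℂ) 0 0 = A 0 1 ∧
    (!![A 0 1, A 0 0; A 1 1, A 1 0] : Matrix (Fin 2) (Fin 2) ℂ) 1 1 = A 1 0 ∧
    (!![A 0 1, A 0 0; A 1 1, A 1 0] : Matrix (Fin 2) (Fin 2) ℂ) 1 0 = A 1 1 ∧
    (!![A 0 1, A 0 0; A 1 1, A 1 0] : Matrix (Fin 2) (Fin 2) ℂ).det = -A.det := by
  refine ⟨by simp, by simp, by simp, ?_⟩
  rw [Matrix.det_fin_two_of, Matrix.det_fin_two]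
  ring

lemma gamma_from_matrix (A : Matrix (Fin 2) (Fin 2) ℂ) (hA : opNorm A < 1) :
    (A 0 1 + A 1 0, -A.det) ∈ GammaSet := by
  obtain ⟨hB00, hB11, hB10, hBdet⟩ := swapMat_facts A
  set B : Matrix (Fin 2) (Fin 2) ℂ := !![A 0 1, A 0 0; A 1 1, A 1 0] with hB
  have hBnorm : opNorm B < 1 := (swap_norm A).trans_lt hA
  obtain ⟨w, hw⟩ := IsAlgClosed.exists_pow_nat_eq (k := ℂ)
    ((A 0 1 + A 1 0) ^ 2 - 4 * (-A.det)) (n := 2) (by norm_num)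
  set t : ℂ := A 0 1 + A 1 0 with ht
  have htr : B 0 0 + B 1 1 = t := by rw [hB00, hB11]
  have hz1 : ((t + w) / 2) ^ 2 - (B 0 0 + B 1 1) * ((t + w) / 2) + B.det = 0 := by
    rw [htr, hBdet]
    linear_combination hw / 4
  have hz2 : ((t - w) / 2) ^ 2 - (B 0 0 + B 1 1) * ((t - w) / 2) + B.det = 0 := by
    rw [htr, hBdet]
    linear_combination hw / 4
  refine ⟨(t + w) / 2, (t - w) / 2, (root_bound B _ hz1).trans hBnorm.le,
    (root_bound B _ hz2).trans hBnorm.le, ?_⟩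
  simp only [Prod.mk.injEq]
  constructor
  · ring
  · linear_combination hw / 4

lemma bullet2 {x a p s : ℂ} (h : (x, a, p, s) ∈ closure domF) :
    (s, -p) ∈ GammaSet := by
  have hcont : Continuous (fun w : ℂ × ℂ × ℂ × ℂ => (w.2.2.2, -w.2.2.1)) := by fun_prop
  have hsub : domF ⊆ (fun w : ℂ × ℂ × ℂ × ℂ => (w.2.2.2, -w.2.2.1)) ⁻¹' GammaSet := by
    rintro w ⟨A, hA, rfl⟩
    exact gamma_from_matrix A hA
  exact closure_minimal hsub (gamma_closed.preimage hcont) h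

lemma bullet3 {x a p s : ℂ} (h : (x, a, p, s) ∈ closure domF) :
    (x, a, p) ∈ closure tetraE := by
  have hcont : Continuous (fun w : ℂ × ℂ × ℂ × ℂ => (w.1, w.2.1, w.2.2.1)) := by fun_prop
  have himg : (fun w : ℂ × ℂ × ℂ × ℂ => (w.1, w.2.1, w.2.2.1)) '' domF ⊆ tetraE := by
    rintro y ⟨w, ⟨A, hA, rfl⟩, rfl⟩
    exact mem_tetra A hA
  have := image_closure_subset_closure_image hcont (s := domF) ⟨(x, a, p, s), h, rfl⟩
  exact closure_mono himg this

lemma bullet4 {x a p s : ℂ} (h : (x, a, p, s) ∈ closure domF) :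
    (a, s, -p) ∈ closure pentaP := by
  have hcont : Continuous (fun w : ℂ × ℂ × ℂ × ℂ => (w.2.1, w.2.2.2, -w.2.2.1)) := by fun_prop
  have himg : (fun w : ℂ × ℂ × ℂ × ℂ => (w.2.1, w.2.2.2, -w.2.2.1)) '' domF ⊆ pentaP := by
    rintro y ⟨w, ⟨A, hA, rfl⟩, rfl⟩
    obtain ⟨hB00, hB11, hB10, hBdet⟩ := swapMat_facts A
    refine ⟨!![A 0 1, A 0 0; A 1 1, A 1 0], (swap_norm A).trans_lt hA, ?_⟩
    simp only [Prod.mk.injEq]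
    exact ⟨hB10.symm, by rw [hB00, hB11], by rw [hBdet]⟩
  have := image_closure_subset_closure_image hcont (s := domF) ⟨(x, a, p, s), h, rfl⟩
  exact closure_mono himg this
end Bullets

/-- Corollary 2.10: (1) if (x, a, p, s) ∈ closure 𝔽 then (s, ax−p) ∈ Γ, (s, −p) ∈ Γ,
(x, a, p) ∈ closure 𝔼 and (a, s, −p) ∈ closure ℙ; (2) (x, a, p) ∈ closure 𝔼 iff
(x, a, p, 0) ∈ closure 𝔽; (3) (s, p) ∈ Γ iff (0, 0, −p, s) ∈ closure 𝔽. -/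
theorem stmt8 (x a p s : ℂ) :
    ((x, a, p, s) ∈ closure domF →
      (s, a * x - p) ∈ GammaSet ∧ (s, -p) ∈ GammaSet ∧
      (x, a, p) ∈ closure tetraE ∧ (a, s, -p) ∈ closure pentaP) ∧
    ((x, a, p) ∈ closure tetraE ↔ (x, a, p, (0 : ℂ)) ∈ closure domF) ∧
    ((s, p) ∈ GammaSet ↔ ((0 : ℂ), (0 : ℂ), -p, s) ∈ closure domF) := by
  refine ⟨fun h => ⟨bullet1 h, bullet2 h, bullet3 h, bullet4 h⟩, ⟨?_, ?_⟩, ⟨?_, ?_⟩⟩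
  · -- tetra → domF closure
    intro h
    have hcont : Continuous (fun y : ℂ × ℂ × ℂ => (y.1, y.2.1, y.2.2, (0:ℂ))) := by fun_prop
    have hsub : tetraE ⊆
        (fun y : ℂ × ℂ × ℂ => (y.1, y.2.1, y.2.2, (0:ℂ))) ⁻¹' closure domF := by
      rintro ⟨x1, x2, x3⟩ hy
      obtain ⟨hc1, hT⟩ := tetra_ineqs hy
      obtain ⟨A, hA, h00, h11, hdet, hsum⟩ := realize hc1.le hT.le
      have := scaling A hA
      rwa [h00, h11, hdet, hsum] at this
    exact closure_minimal hsub (isClosed_closure.preimage hcont) h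
  · intro h
    exact bullet3 h
  · -- Gamma → domF closure
    rintro ⟨z1, z2, h1, h2, heq⟩
    have heq1 : s = z1 + z2 := congrArg Prod.fst heq
    have heq2 : p = z1 * z2 := congrArg Prod.snd heq
    set A : Matrix (Fin 2) (Fin 2) ℂ := !![0, z1; z2, 0] with hA
    have hnorm : opNorm A ≤ 1 := by
      apply opNorm_le_of_bound _ _ zero_le_one
      intro v0 v1
      rw [show A 0 0 = 0 from by simp [hA], show A 0 1 = z1 from by simp [hA],
        show A 1 0 = z2 from by simp [hA], show A 1 1 = 0 from by simp [hA]]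
      simp only [zero_mul, mul_zero, zero_add, add_zero, one_pow, one_mul, norm_mul]
      rw [mul_pow, mul_pow]
      have e1 : ‖z1‖ ^ 2 ≤ 1 := by
        nlinarith [norm_nonneg z1]
      have e2 : ‖z2‖ ^ 2 ≤ 1 := by
        nlinarith [norm_nonneg z2]
      nlinarith [mul_le_mul_of_nonneg_right e1 (sq_nonneg (‖v1‖)),
        mul_le_mul_of_nonneg_right e2 (sq_nonneg (‖v0‖)),
        sq_nonneg (‖v0‖), sq_nonneg (‖v1‖)]
    have := scaling A hnorm
    have hfacts : A 0 0 = 0 ∧ A 1 1 = 0 ∧ A.det = -p ∧ A 0 1 + A 1 0 = s := by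
      refine ⟨by simp [hA], by simp [hA], ?_, by simp [hA, heq1]⟩
      rw [hA, Matrix.det_fin_two_of, heq2]
      ring
    rwa [hfacts.1, hfacts.2.1, hfacts.2.2.1, hfacts.2.2.2] at this
  · intro h
    have := bullet2 h
    simpa using this
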